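/- Let T ≅ ℤ^n be the translation subgroup of an n-dimensional crystallographic group G acting on ℝ^n, and let H be a G-essential hyperplane of a CAT(0) cube complex X on which G acts properly and cocompactly. Then the stabilizer in T of H is a subgroup isomorphic to ℤ^{n-1}. -/

import Mathlib

namespace CrystAux2

variable {V W : Type*} {G : Type*} [Group G] [MulAction G V] [MulAction G W]

lemma side_smul (side : W → V → Bool)
    (hside : ∀ (g : G) (w : W) (v : V), side (g • w) (g • v) = side w v)
    (g : G) (w : W) (v : V) : side w (g • v) = side (g⁻¹ • w) v := by
  have := hside g (g⁻¹ • w) v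
  rwa [smul_inv_smul] at this

lemma part1 (Γ : SimpleGraph V) (hconn : Γ.Connected) (side : W → V → Bool)
    (hadj : ∀ (g : G) (u v : V), Γ.Adj u v → Γ.Adj (g • u) (g • v))
    (hside : ∀ (g : G) (w : W) (v : V), side (g • w) (g • v) = side w v)
    (H : W) (K : Subgroup G) (hKstab : ∀ k : G, k ∈ K → k • H = H)
    (hfinQ : Finite (G ⧸ K)) (v₀ : V)
    (hessential : ∀ (v : V) (m : ℕ), ∃ g g' : G,
      side H (g • v) = true ∧ side H (g' • v) = false ∧
      (∀ u : V, side H u = false → m ≤ Γ.dist (g • v) u) ∧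
      (∀ u : V, side H u = true → m ≤ Γ.dist (g' • v) u)) : False := by
  classical
  have hdist_smul : ∀ (g : G) (u v : V), Γ.dist (g • u) (g • v) = Γ.dist u v := by
    intro g u v
    have key : ∀ (h : G) (x y : V), Γ.dist (h • x) (h • y) ≤ Γ.dist x y := by
      intro h x y
      obtain ⟨p, hp⟩ := hconn.exists_walk_length_eq_dist x y
      let f : Γ →g Γ := ⟨fun z => h • z, fun ha => hadj h _ _ ha⟩
      have := SimpleGraph.dist_le (p.map f)
      rwa [SimpleGraph.Walk.length_map, hp] at this
    refine le_antisymm (key g u v) ?_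
    have := key g⁻¹ (g • u) (g • v)
    simpa using this
  -- members of K preserve sides
  have hKside : ∀ (k : G), k ∈ K → ∀ x : V, side H (k • x) = side H x := by
    intro k hk x
    rw [side_smul side hside, hKstab k⁻¹ (K.inv_mem hk)]
  haveI : Fintype (G ⧸ K) := Fintype.ofFinite _
  set R : (G ⧸ K) → G := fun q => (Quotient.out q)⁻¹ with hR
  set D : ℕ := Finset.univ.sup (fun q : G ⧸ K => Γ.dist v₀ (R q • v₀)) with hD
  have hDle : ∀ q : G ⧸ K, Γ.dist v₀ (R q • v₀) ≤ D := by
    intro q; rw [hD]; exact Finset.le_sup (f := fun q : G ⧸ K => Γ.dist v₀ (R q • v₀)) (Finset.mem_univ q)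
  -- decomposition g = k * r
  have hdecomp : ∀ g : G, ∃ k : G, k ∈ K ∧ g = k * R ((g⁻¹ : G) : G ⧸ K) := by
    intro g
    set q : G ⧸ K := ((g⁻¹ : G) : G ⧸ K) with hq
    have hout : ((Quotient.out q : G) : G ⧸ K) = ((g⁻¹ : G) : G ⧸ K) := Quotient.out_eq q
    have hmem : (Quotient.out q)⁻¹ * g⁻¹ ∈ K := (QuotientGroup.eq).mp hout
    refine ⟨g * Quotient.out q, ?_, by simp only [hR]; group⟩
    have := K.inv_mem hmem
    simpa [mul_inv_rev] using this
  obtain ⟨g, g', hgt, hg'f, hgdeep, _⟩ := hessential v₀ (2 * D + 1)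
  obtain ⟨k, hk, hgk⟩ := hdecomp g
  obtain ⟨k', hk', hg'k⟩ := hdecomp g'
  set r : G := R ((g⁻¹ : G) : G ⧸ K)
  set r' : G := R ((g'⁻¹ : G) : G ⧸ K)
  -- the point u on the false side near g • v₀
  have hfalse : side H (r' • v₀) = false := by
    have : side H (g' • v₀) = side H (r' • v₀) := by
      rw [hg'k, mul_smul]; exact hKside k' hk' _
    rw [← this]; exact hg'f
  have hufalse : side H ((k * r') • v₀) = false := by
    rw [mul_smul]; rw [hKside k hk]; exact hfalse
  have hdeep := hgdeep ((k * r') • v₀) hufalse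
  have hclose : Γ.dist (g • v₀) ((k * r') • v₀) ≤ 2 * D := by
    have h1 : Γ.dist (g • v₀) ((k * r') • v₀) = Γ.dist (r • v₀) (r' • v₀) := by
      rw [hgk, mul_smul, mul_smul, hdist_smul]
    have h2 : Γ.dist (r • v₀) (r' • v₀) ≤ Γ.dist (r • v₀) v₀ + Γ.dist v₀ (r' • v₀) :=
      hconn.dist_triangle
    have h3 : Γ.dist (r • v₀) v₀ ≤ D := by
      rw [SimpleGraph.dist_comm]; exact hDle _
    have h4 : Γ.dist v₀ (r' • v₀) ≤ D := hDle _
    omega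
  omega

end CrystAux2


namespace CrystAux3

lemma line_const (f : ℤ → Bool) (hf : ∀ k : ℤ, f (k + 1) = f k) (k k' : ℤ) : f k = f k' := by
  suffices h : ∀ j : ℤ, f j = f 0 by rw [h k, h k']
  intro j
  induction j using Int.induction_on with
  | zero => rfl
  | succ i ih => rw [hf i]; exact ih
  | pred i ih =>
    have h2 : f (-(i : ℤ) - 1 + 1) = f (-(i : ℤ) - 1) := hf _
    have h3 : (-(i : ℤ) - 1 + 1) = -(i : ℤ) := by ring
    rw [h3] at h2
    rw [← h2]; exact ih

end CrystAux3

namespace P2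

variable {V W : Type*} {G : Type*} [Group G] [MulAction G V] [MulAction G W]

lemma part2 (Γ : SimpleGraph V) (hconn : Γ.Connected) (side : W → V → Bool)
    (hfin : ∀ u v : V, {w : W | side w u ≠ side w v}.Finite)
    (hdist : ∀ u v : V, Γ.dist u v = {w : W | side w u ≠ side w v}.ncard)
    (hadj : ∀ (g : G) (u v : V), Γ.Adj u v → Γ.Adj (g • u) (g • v))
    (hside : ∀ (g : G) (w : W) (v : V), side (g • w) (g • v) = side w v)
    (T : Subgroup G) [T.Normal] [T.FiniteIndex]
    (hcommT : ∀ x y : G, x ∈ T → y ∈ T → Commute x y)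
    (H : W) (v₀ : V)
    (hessential : ∀ (v : V) (m : ℕ), ∃ g g' : G,
      side H (g • v) = true ∧ side H (g' • v) = false ∧
      (∀ u : V, side H u = false → m ≤ Γ.dist (g • v) u) ∧
      (∀ u : V, side H u = true → m ≤ Γ.dist (g' • v) u))
    (a b : G) (ha : a ∈ T) (hb : b ∈ T)
    (hinj : ∀ p q : ℤ, a ^ p * b ^ q ∈ T ⊓ MulAction.stabilizer G H → p = 0 ∧ q = 0) :
    False := by
  classical
  -- basic facts
  have hdist_smul : ∀ (g : G) (u v : V), Γ.dist (g • u) (g • v) = Γ.dist u v := by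
    intro g u v
    have key : ∀ (h : G) (x y : V), Γ.dist (h • x) (h • y) ≤ Γ.dist x y := by
      intro h x y
      obtain ⟨p, hp⟩ := hconn.exists_walk_length_eq_dist x y
      let f : Γ →g Γ := ⟨fun z => h • z, fun ha => hadj h _ _ ha⟩
      have := SimpleGraph.dist_le (p.map f)
      rwa [SimpleGraph.Walk.length_map, hp] at this
    refine le_antisymm (key g u v) ?_
    have := key g⁻¹ (g • u) (g • v)
    simpa using this
  have hside_smul : ∀ (g : G) (w : W) (v : V), side w (g • v) = side (g⁻¹ • w) v := by
    intro g w v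
    have := hside g (g⁻¹ • w) v
    rwa [smul_inv_smul] at this
  have hdisp_zpow : ∀ (g : G) (x : V) (k : ℤ),
      Γ.dist x (g ^ k • x) ≤ k.natAbs * Γ.dist x (g • x) := by
    intro g x k
    have hnat : ∀ m : ℕ, Γ.dist x (g ^ (m : ℤ) • x) ≤ m * Γ.dist x (g • x) := by
      intro m
      induction m with
      | zero => simp
      | succ m ih =>
        have h1 : Γ.dist x (g ^ ((m : ℤ) + 1) • x) ≤
            Γ.dist x (g • x) + Γ.dist (g • x) (g ^ ((m : ℤ) + 1) • x) :=
          hconn.dist_triangle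
        have h2 : Γ.dist (g • x) (g ^ ((m : ℤ) + 1) • x) = Γ.dist x (g ^ (m : ℤ) • x) := by
          have h3 : g ^ ((m : ℤ) + 1) • x = g • (g ^ (m : ℤ) • x) := by
            rw [← mul_smul, ← zpow_one_add]; ring_nf
          rw [h3, hdist_smul]
        push_cast
        calc Γ.dist x (g ^ ((m : ℤ) + 1) • x)
            ≤ Γ.dist x (g • x) + Γ.dist x (g ^ (m : ℤ) • x) := by rw [← h2]; exact h1
          _ ≤ Γ.dist x (g • x) + m * Γ.dist x (g • x) := by omega
          _ = (m + 1) * Γ.dist x (g • x) := by ring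
    rcases Int.natAbs_eq k with hk | hk
    · rw [hk]; exact hnat k.natAbs
    · rw [hk]
      have h5 : Γ.dist x (g ^ (-(k.natAbs : ℤ)) • x) = Γ.dist x (g ^ (k.natAbs : ℤ) • x) := by
        have h3 := hdist_smul (g ^ (k.natAbs : ℤ)) x (g ^ (-(k.natAbs : ℤ)) • x)
        rw [← mul_smul] at h3
        simp only [← zpow_add, add_neg_cancel, zpow_zero, one_smul] at h3
        rw [← h3, SimpleGraph.dist_comm]
      rw [h5, Int.natAbs_neg, Int.natAbs_natCast]
      exact hnat k.natAbs
  -- commutation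
  have hab : Commute a b := hcommT a b ha hb
  have hmul : ∀ x y u v : ℤ, (a ^ x * b ^ y) * (a ^ u * b ^ v) = a ^ (x + u) * b ^ (y + v) := by
    intro x y u v
    have hcba : Commute (b ^ y) (a ^ u) := (hab.symm).zpow_zpow y u
    calc (a ^ x * b ^ y) * (a ^ u * b ^ v) = a ^ x * (b ^ y * a ^ u) * b ^ v := by group
      _ = a ^ x * (a ^ u * b ^ y) * b ^ v := by rw [hcba.eq]
      _ = a ^ (x + u) * b ^ (y + v) := by rw [zpow_add, zpow_add]; group
  -- the wall family
  set wl : ℤ × ℤ → W := fun p => (a ^ p.1 * b ^ p.2)⁻¹ • H with hwl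
  set χ : V → ℤ × ℤ → Bool := fun v p => side H ((a ^ p.1 * b ^ p.2) • v) with hχ
  have hχw : ∀ v p, χ v p = side (wl p) v := by
    intro v p
    rw [hχ, hwl]
    exact hside_smul (a ^ p.1 * b ^ p.2) H v
  have hwinj : Function.Injective wl := by
    intro p q hpq
    simp only [hwl] at hpq
    set x : G := a ^ q.1 * b ^ q.2
    set y : G := a ^ p.1 * b ^ p.2
    have hstab : (a ^ (q.1 - p.1) * b ^ (q.2 - p.2)) • H = H := by
      have hc : (a ^ (q.1 - p.1) * b ^ (q.2 - p.2)) * y = x := by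
        rw [hmul]; simp; rfl
      have hcxy : a ^ (q.1 - p.1) * b ^ (q.2 - p.2) = x * y⁻¹ := by
        rw [← hc]; group
      rw [hcxy, mul_smul]
      calc x • (y⁻¹ • H) = x • (x⁻¹ • H) := by rw [show y⁻¹ • H = x⁻¹ • H from hpq]
        _ = H := smul_inv_smul x H
    have hmem : a ^ (q.1 - p.1) * b ^ (q.2 - p.2) ∈ T ⊓ MulAction.stabilizer G H := by
      constructor
      · exact mul_mem (zpow_mem ha _) (zpow_mem hb _)
      · exact hstab
    obtain ⟨h1, h2⟩ := hinj _ _ hmem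
    have : p.1 = q.1 := by omega
    have : p.2 = q.2 := by omega
    exact Prod.ext (by omega) (by omega)
  -- flip sets
  set Fa : V → Set (ℤ × ℤ) := fun v => {p | χ v (p.1 + 1, p.2) ≠ χ v p} with hFa
  set Fb : V → Set (ℤ × ℤ) := fun v => {p | χ v (p.1, p.2 + 1) ≠ χ v p} with hFb
  have hkeyA : ∀ v p, χ v (p.1 + 1, p.2) = side (wl p) (a • v) := by
    intro v p
    have he : a ^ (p.1 + 1) * b ^ p.2 = (a ^ p.1 * b ^ p.2) * a := by
      have := hmul p.1 p.2 1 0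
      simpa using this.symm
    rw [hχ]
    show side H ((a ^ (p.1+1) * b ^ p.2) • v) = _
    rw [he, mul_smul, hside_smul, hwl]
  have hkeyB : ∀ v p, χ v (p.1, p.2 + 1) = side (wl p) (b • v) := by
    intro v p
    have he : a ^ p.1 * b ^ (p.2 + 1) = (a ^ p.1 * b ^ p.2) * b := by
      have := hmul p.1 p.2 0 1
      simpa using this.symm
    rw [hχ]
    show side H ((a ^ p.1 * b ^ (p.2+1)) • v) = _
    rw [he, mul_smul, hside_smul, hwl]
  have hFaeq : ∀ v, Fa v = wl ⁻¹' {w | side w v ≠ side w (a • v)} := by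
    intro v
    ext p
    simp only [hFa, Set.mem_setOf_eq, Set.mem_preimage, hkeyA v p, hχw v p, ne_comm]
  have hFbeq : ∀ v, Fb v = wl ⁻¹' {w | side w v ≠ side w (b • v)} := by
    intro v
    ext p
    simp only [hFb, Set.mem_setOf_eq, Set.mem_preimage, hkeyB v p, hχw v p, ne_comm]
  have hsepfin : ∀ u v : V, {w : W | side w u ≠ side w v}.Finite := hfin
  have hFafin : ∀ v, (Fa v).Finite := by
    intro v
    rw [hFaeq v]
    exact (hsepfin v (a • v)).preimage (hwinj.injOn)
  have hFbfin : ∀ v, (Fb v).Finite := by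
    intro v
    rw [hFbeq v]
    exact (hsepfin v (b • v)).preimage (hwinj.injOn)
  have hFbcard : ∀ v, (Fb v).ncard ≤ Γ.dist v (b • v) := by
    intro v
    rw [hdist v (b • v), hFbeq v]
    calc (wl ⁻¹' {w | side w v ≠ side w (b • v)}).ncard
        = (wl '' (wl ⁻¹' {w | side w v ≠ side w (b • v)})).ncard :=
          (Set.ncard_image_of_injective _ hwinj).symm
      _ ≤ {w | side w v ≠ side w (b • v)}.ncard :=
          Set.ncard_le_ncard (Set.image_preimage_subset _ _) (hsepfin _ _)
  -- bad rows and columns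
  set Ra : V → Set ℤ := fun v => Prod.snd '' Fa v with hRa
  set Cb : V → Set ℤ := fun v => Prod.fst '' Fb v with hCb
  have hRafin : ∀ v, (Ra v).Finite := fun v => (hFafin v).image _
  have hCbfin : ∀ v, (Cb v).Finite := fun v => (hFbfin v).image _
  have hCbcard : ∀ v, (Cb v).ncard ≤ Γ.dist v (b • v) := by
    intro v
    exact le_trans (Set.ncard_image_le (hFbfin v)) (hFbcard v)
  -- rows and columns without flips are constant
  have rowConst : ∀ v (l : ℤ), l ∉ Ra v → ∀ k k' : ℤ, χ v (k, l) = χ v (k', l) := by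
    intro v l hl k k'
    refine CrystAux3.line_const (fun j => χ v (j, l)) ?_ k k'
    intro j
    by_contra hne
    exact hl ⟨(j, l), hne, rfl⟩
  have colConst : ∀ v (k : ℤ), k ∉ Cb v → ∀ l l' : ℤ, χ v (k, l) = χ v (k, l') := by
    intro v k hk l l'
    refine CrystAux3.line_const (fun j => χ v (k, j)) ?_ l l'
    intro j
    by_contra hne
    exact hk ⟨(k, j), hne, rfl⟩
  -- structure: χ v is constant off the bad grid
  have hpkg : ∀ v : V, ∃ c : Bool, {p : ℤ × ℤ | χ v p ≠ c}.Finite ∧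
      ∀ k : ℤ, k ∉ Cb v → χ v (k, 0) = c := by
    intro v
    obtain ⟨l₀, hl₀⟩ := ((hRafin v).infinite_compl).nonempty
    obtain ⟨k₀, hk₀⟩ := ((hCbfin v).infinite_compl).nonempty
    simp only [Set.mem_compl_iff] at hl₀ hk₀
    refine ⟨χ v (k₀, l₀), ?_, ?_⟩
    · apply Set.Finite.subset ((hCbfin v).prod (hRafin v))
      intro p hp
      simp only [Set.mem_setOf_eq] at hp
      by_contra hmem
      simp only [Set.mem_prod, not_and_or] at hmem
      apply hp
      rcases hmem with hm1 | hm2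
      · calc χ v p = χ v (p.1, l₀) := colConst v p.1 hm1 p.2 l₀
          _ = χ v (k₀, l₀) := rowConst v l₀ hl₀ p.1 k₀
      · calc χ v p = χ v (k₀, p.2) := rowConst v p.2 hm2 p.1 k₀
          _ = χ v (k₀, l₀) := colConst v k₀ hk₀ p.2 l₀
    · intro k hk
      calc χ v (k, 0) = χ v (k, l₀) := colConst v k hk 0 l₀
        _ = χ v (k₀, l₀) := rowConst v l₀ hl₀ k k₀
  -- uniqueness of the generic value
  have huniq : ∀ (f : ℤ × ℤ → Bool) (c c' : Bool),
      {p : ℤ × ℤ | f p ≠ c}.Finite → {p : ℤ × ℤ | f p ≠ c'}.Finite → c = c' := by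
    intro f c c' h1 h2
    by_contra hne
    have huniv : (Set.univ : Set (ℤ × ℤ)) ⊆ {p | f p ≠ c} ∪ {p | f p ≠ c'} := by
      intro p _
      by_cases hc : f p = c
      · right; simp only [Set.mem_setOf_eq, hc]; exact hne
      · left; exact hc
    exact Set.infinite_univ (Set.Finite.subset (h1.union h2) huniv)
  -- generic values at different basepoints agree
  have hdiff_fin : ∀ u v : V, {p : ℤ × ℤ | χ u p ≠ χ v p}.Finite := by
    intro u v
    have : {p : ℤ × ℤ | χ u p ≠ χ v p} = wl ⁻¹' {w | side w u ≠ side w v} := by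
      ext p
      simp only [Set.mem_setOf_eq, Set.mem_preimage, hχw u p, hχw v p]
    rw [this]
    exact (hsepfin u v).preimage hwinj.injOn
  -- conjugation displacement bound
  haveI : Fintype (G ⧸ T) := Fintype.ofFinite _
  set CC : G → ℕ := fun c =>
    Finset.univ.sup (fun q : G ⧸ T =>
      Γ.dist v₀ ((((Quotient.out q)⁻¹ * c * Quotient.out q)) • v₀)) with hCCdef
  have hCC : ∀ (c : G), c ∈ T → ∀ (g : G) (k : ℤ),
      Γ.dist (g • v₀) ((c ^ k * g) • v₀) ≤ k.natAbs * CC c := by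
    intro c hc g k
    have h1 : Γ.dist (g • v₀) ((c ^ k * g) • v₀) = Γ.dist v₀ ((g⁻¹ * c ^ k * g) • v₀) := by
      have h := hdist_smul g v₀ ((g⁻¹ * c ^ k * g) • v₀)
      rw [← mul_smul] at h
      have he : g * (g⁻¹ * c ^ k * g) = c ^ k * g := by group
      rw [he] at h
      exact h
    have h2 : g⁻¹ * c ^ k * g = (g⁻¹ * c * g) ^ k := by
      have hmz := map_zpow (MulAut.conj g⁻¹) c k
      simp only [MulAut.conj_apply, inv_inv] at hmz
      rw [hmz]
    have h3 : Γ.dist v₀ ((g⁻¹ * c * g) ^ k • v₀) ≤ k.natAbs * Γ.dist v₀ ((g⁻¹ * c * g) • v₀) :=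
      hdisp_zpow (g⁻¹ * c * g) v₀ k
    -- bound the conjugate displacement by CC c
    set q : G ⧸ T := (g : G ⧸ T) with hq
    have hout : ((Quotient.out q : G) : G ⧸ T) = (g : G ⧸ T) := Quotient.out_eq q
    have ht : (Quotient.out q)⁻¹ * g ∈ T := (QuotientGroup.eq).mp hout
    set t : G := (Quotient.out q)⁻¹ * g with hts
    have hgx : g = Quotient.out q * t := by rw [hts]; group
    set x : G := (Quotient.out q)⁻¹ * c * Quotient.out q with hx
    have hxT : x ∈ T := by
      have := (‹T.Normal›).conj_mem c hc (Quotient.out q)⁻¹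
      simpa [hx, mul_assoc] using this
    have hconj : g⁻¹ * c * g = x := by
      have hcomm := (hcommT x t hxT ht).eq
      have e1 : g⁻¹ * c * g = t⁻¹ * x * t := by rw [hgx, hx]; group
      have e2 : t⁻¹ * x * t = x := by
        rw [mul_assoc, hcomm, ← mul_assoc]; group
      rw [e1, e2]
    have h4 : Γ.dist v₀ ((g⁻¹ * c * g) • v₀) ≤ CC c := by
      rw [hconj, hCCdef]
      exact Finset.le_sup (f := fun q : G ⧸ T =>
        Γ.dist v₀ ((((Quotient.out q)⁻¹ * c * Quotient.out q)) • v₀)) (Finset.mem_univ q)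
    calc Γ.dist (g • v₀) ((c ^ k * g) • v₀) = Γ.dist v₀ ((g⁻¹ * c ^ k * g) • v₀) := h1
      _ = Γ.dist v₀ ((g⁻¹ * c * g) ^ k • v₀) := by rw [h2]
      _ ≤ k.natAbs * Γ.dist v₀ ((g⁻¹ * c * g) • v₀) := h3
      _ ≤ k.natAbs * CC c := Nat.mul_le_mul_left _ h4
  -- the contradiction
  set m : ℕ := CC a * CC b + 1 with hm
  obtain ⟨g, g', hgt, hg'f, hgdeep, hg'deep⟩ := hessential v₀ m
  -- pigeonhole: pick a good column in [0, CC b]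
  have hpick : ∀ gg : G, ∃ k : ℤ, 0 ≤ k ∧ k ≤ (CC b : ℤ) ∧ k ∉ Cb (gg • v₀) := by
    intro gg
    by_contra hcon
    push_neg at hcon
    have hsub : ((Finset.Icc (0 : ℤ) (CC b : ℤ)) : Set ℤ) ⊆ Cb (gg • v₀) := by
      intro k hk
      simp only [Finset.coe_Icc, Set.mem_Icc] at hk
      exact hcon k hk.1 hk.2
    have h5 : ((Finset.Icc (0 : ℤ) (CC b : ℤ)) : Set ℤ).ncard ≤ (Cb (gg • v₀)).ncard :=
      Set.ncard_le_ncard hsub (hCbfin _)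
    rw [Set.ncard_coe_finset, Int.card_Icc] at h5
    have h6 : (Cb (gg • v₀)).ncard ≤ Γ.dist (gg • v₀) (b • (gg • v₀)) := hCbcard _
    have h7 : Γ.dist (gg • v₀) (b • (gg • v₀)) ≤ CC b := by
      have := hCC b hb gg 1
      simpa [mul_smul] using this
    omega
  -- evaluate the generic value at the deep false point
  have hgen : ∀ (gg : G), (∀ u : V, side H u = (!(side H (gg • v₀))) → m ≤ Γ.dist (gg • v₀) u) →
      ∀ c : Bool, {p : ℤ × ℤ | χ (gg • v₀) p ≠ c}.Finite →
      (∀ k : ℤ, k ∉ Cb (gg • v₀) → χ (gg • v₀) (k, 0) = c) →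
      c = side H (gg • v₀) := by
    intro gg hdeep c hcfin hcval
    obtain ⟨k, hk0, hkle, hkgood⟩ := hpick gg
    have h8 : χ (gg • v₀) (k, 0) = c := hcval k hkgood
    have h9 : χ (gg • v₀) (k, 0) = side H ((a ^ k * gg) • v₀) := by
      rw [hχ]
      show side H ((a ^ k * b ^ (0 : ℤ)) • (gg • v₀)) = _
      rw [zpow_zero, mul_one, ← mul_smul]
    by_contra hne
    have hval : side H ((a ^ k * gg) • v₀) = (!(side H (gg • v₀))) := by
      have hc9 : side H ((a ^ k * gg) • v₀) = c := by rw [← h9, h8]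
      rw [hc9]
      exact Bool.eq_not_iff.mpr hne
    have h10 := hdeep ((a ^ k * gg) • v₀) hval
    have h11 : Γ.dist (gg • v₀) ((a ^ k * gg) • v₀) ≤ k.natAbs * CC a := hCC a ha gg k
    have h12 : k.natAbs ≤ CC b := by omega
    have h13 : k.natAbs * CC a ≤ CC b * CC a := Nat.mul_le_mul_right _ h12
    rw [hm] at h10
    have : CC b * CC a = CC a * CC b := Nat.mul_comm _ _
    omega
  obtain ⟨cP, hcPfin, hcPval⟩ := hpkg (g' • v₀)
  obtain ⟨cU, hcUfin, hcUval⟩ := hpkg (g • v₀)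
  have hcPeq : cP = side H (g' • v₀) := by
    apply hgen g' _ cP hcPfin hcPval
    intro u hu
    apply hg'deep u
    rw [hg'f] at hu
    simpa using hu
  have hcUeq : cU = side H (g • v₀) := by
    apply hgen g _ cU hcUfin hcUval
    intro u hu
    apply hgdeep u
    rw [hgt] at hu
    simpa using hu
  -- the generic values agree
  have hPU : cP = cU := by
    apply huniq (χ (g' • v₀)) cP cU hcPfin
    apply Set.Finite.subset ((hdiff_fin (g' • v₀) (g • v₀)).union hcUfin)
    intro p hp
    simp only [Set.mem_setOf_eq, Set.mem_union] at hp ⊢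
    by_cases h : χ (g' • v₀) p = χ (g • v₀) p
    · right; rwa [← h]
    · left; exact h
  rw [hcPeq, hcUeq, hg'f, hgt] at hPU
  exact Bool.noConfusion hPU

end P2


namespace CrystAlg

noncomputable section

/-- coordinatewise cast to ℚ as a ℤ-linear map -/
def castQ (n : ℕ) : (Fin n → ℤ) →ₗ[ℤ] (Fin n → ℚ) where
  toFun x := fun j => (x j : ℚ)
  map_add' x y := by funext j; simp
  map_smul' c x := by funext j; push_cast; simp

lemma castQ_inj (n : ℕ) : Function.Injective (castQ n) := by
  intro x y h
  funext j
  have h2 := congrFun h j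
  simp only [castQ, LinearMap.coe_mk, AddHom.coe_mk] at h2
  exact_mod_cast h2

lemma den_clear (d : ℤ) (q : ℚ) (h : (q.den : ℤ) ∣ d) : ∃ z : ℤ, (z : ℚ) = d * q := by
  obtain ⟨e, he⟩ := h
  refine ⟨e * q.num, ?_⟩
  have hq : q * (q.den : ℚ) = (q.num : ℚ) := Rat.mul_den_eq_num q
  push_cast
  rw [he]
  push_cast
  calc (e : ℚ) * (q.num : ℚ) = (e : ℚ) * (q * (q.den : ℚ)) := by rw [hq]
    _ = (q.den : ℚ) * (e : ℚ) * q := by ring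

/-- common denominator for a finite family of rationals -/
lemma common_den {ι : Type*} [Fintype ι] (c : ι → ℚ) :
    ∃ (D : ℤ), D ≠ 0 ∧ ∀ i, ∃ z : ℤ, (z : ℚ) = D * c i := by
  refine ⟨∏ i, ((c i).den : ℤ), ?_, ?_⟩
  · apply Finset.prod_ne_zero_iff.mpr
    intro i _
    exact_mod_cast (c i).den_nz
  · intro i
    apply den_clear
    exact Finset.dvd_prod_of_mem (fun i => ((c i).den : ℤ)) (Finset.mem_univ i)

lemma li_cast {n : ℕ} {ι : Type*} [Fintype ι] (w : ι → (Fin n → ℤ))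
    (h : LinearIndependent ℤ w) :
    LinearIndependent ℚ (fun i => castQ n (w i)) := by
  rw [Fintype.linearIndependent_iff]
  intro c hc
  obtain ⟨D, hD0, hDz⟩ := common_den c
  choose z hz using hDz
  have hzero : ∑ i, z i • w i = 0 := by
    apply castQ_inj n
    rw [map_sum, map_zero]
    have : ∀ i, castQ n (z i • w i) = (z i : ℚ) • castQ n (w i) := by
      intro i
      rw [map_smul]
      simp [Int.cast_smul_eq_zsmul ℚ]
    rw [Finset.sum_congr rfl (fun i _ => this i)]
    calc ∑ i, (z i : ℚ) • castQ n (w i) = ∑ i, (D : ℚ) • (c i • castQ n (w i)) := by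
          apply Finset.sum_congr rfl
          intro i _
          rw [hz i, mul_smul]
      _ = (D : ℚ) • ∑ i, c i • castQ n (w i) := by rw [Finset.smul_sum]
      _ = 0 := by rw [hc, smul_zero]
  have hz0 := Fintype.linearIndependent_iff.mp h _ hzero
  intro i
  have : (z i : ℚ) = 0 := by rw [hz0 i]; simp
  rw [hz i] at this
  rcases mul_eq_zero.mp this with h1 | h1
  · exact absurd (by exact_mod_cast h1) hD0
  · exact h1

lemma algebra_core {n : ℕ} (hn : 1 ≤ n) (N : AddSubgroup (Fin n → ℤ))
    (hno : ¬ ∃ d : ℤ, d ≠ 0 ∧ ∀ x : Fin n → ℤ, d • x ∈ N)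
    (hdep : ∀ x y : Fin n → ℤ, ∃ p q : ℤ, ¬(p = 0 ∧ q = 0) ∧ p • x + q • y ∈ N) :
    Nonempty (↥N ≃+ (Fin (n - 1) → ℤ)) := by
  classical
  set N' : Submodule ℤ (Fin n → ℤ) := AddSubgroup.toIntSubmodule N with hN'
  obtain ⟨m, bN⟩ := Submodule.basisOfPid (Pi.basisFun ℤ (Fin n)) N'
  set v : Fin m → (Fin n → ℤ) := fun i => ((bN i : ↥N') : Fin n → ℤ) with hv
  have hvmem : ∀ i, v i ∈ N := fun i => (bN i).2
  have hli : LinearIndependent ℤ v :=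
    bN.linearIndependent.map' N'.subtype (Submodule.ker_subtype N')
  have hfr : Module.finrank ℤ (Fin n → ℤ) = n := Module.finrank_fin_fun ℤ
  have hmn : m ≤ n := by
    have := hli.fintype_card_le_finrank
    rwa [Fintype.card_fin, hfr] at this
  -- the rational span of N
  set vQ : Fin m → (Fin n → ℚ) := fun i => castQ n (v i) with hvQ
  have hliQ : LinearIndependent ℚ vQ := li_cast v hli
  set WQ : Submodule ℚ (Fin n → ℚ) := Submodule.span ℚ (Set.range vQ) with hWQ
  have hNW : ∀ x ∈ N, castQ n x ∈ WQ := by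
    intro x hx
    have hx' : x ∈ N' := hx
    have hrepr := Module.Basis.sum_repr bN ⟨x, hx'⟩
    have hxv : ∑ i, (bN.repr ⟨x, hx'⟩ i) • v i = x := by
      have := congrArg (fun z : ↥N' => (z : Fin n → ℤ)) hrepr
      simpa [hv, -Module.Basis.sum_repr] using this
    rw [← hxv, map_sum]
    apply Submodule.sum_mem
    intro i _
    rw [map_smul]
    have : ((bN.repr ⟨x, hx'⟩ i : ℤ)) • castQ n (v i)
        = ((bN.repr ⟨x, hx'⟩ i : ℤ) : ℚ) • vQ i := by
      rw [Int.cast_smul_eq_zsmul ℚ, hvQ]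
    rw [this]
    exact Submodule.smul_mem _ _ (Submodule.subset_span ⟨i, rfl⟩)
  -- standard basis vectors
  set ei : Fin n → (Fin n → ℤ) := fun j => Pi.single j 1 with hei
  have hcastei : ∀ j, castQ n (ei j) = Pi.single j (1 : ℚ) := by
    intro j
    funext k
    by_cases h : k = j
    · subst h; simp [hei, castQ, Pi.single_apply]
    · simp [hei, castQ, Pi.single_apply, h]
  -- m ≠ n
  have hm_ne : m ≠ n := by
    intro hmeq
    apply hno
    -- vQ is a basis of ℚ^n
    have hcard : Fintype.card (Fin m) = Module.finrank ℚ (Fin n → ℚ) := by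
      rw [Fintype.card_fin, Module.finrank_fin_fun ℚ]; exact hmeq
    have hspan : Submodule.span ℚ (Set.range vQ) = ⊤ := by
      by_cases hm0 : m = 0
      · exfalso; omega
      · haveI : Nonempty (Fin m) := ⟨⟨0, Nat.pos_of_ne_zero hm0⟩⟩
        rw [← coe_basisOfLinearIndependentOfCardEqFinrank hliQ hcard]
        exact Module.Basis.span_eq _
    -- for each coordinate, a multiple of the standard vector lies in N
    have hej : ∀ j : Fin n, ∃ dj : ℤ, dj ≠ 0 ∧ dj • ei j ∈ N := by
      intro j
      have hmem : castQ n (ei j) ∈ Submodule.span ℚ (Set.range vQ) := by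
        rw [hspan]; trivial
      rw [Submodule.mem_span_range_iff_exists_fun] at hmem
      obtain ⟨c, hc⟩ := hmem
      obtain ⟨D, hD0, hDz⟩ := common_den c
      choose z hz using hDz
      refine ⟨D, hD0, ?_⟩
      have hkey : D • ei j = ∑ i, z i • v i := by
        apply castQ_inj n
        rw [map_sum, map_smul]
        calc (D : ℤ) • castQ n (ei j) = (D : ℚ) • castQ n (ei j) := by
              rw [Int.cast_smul_eq_zsmul ℚ]
          _ = (D : ℚ) • ∑ i, c i • vQ i := by rw [hc]
          _ = ∑ i, ((D : ℚ) * c i) • vQ i := by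
              rw [Finset.smul_sum]; apply Finset.sum_congr rfl; intro i _; rw [mul_smul]
          _ = ∑ i, ((z i : ℚ)) • vQ i := by
              apply Finset.sum_congr rfl; intro i _; rw [hz i]
          _ = ∑ i, castQ n (z i • v i) := by
              apply Finset.sum_congr rfl; intro i _
              rw [map_smul, Int.cast_smul_eq_zsmul ℚ, hvQ]
      rw [hkey]
      exact AddSubgroup.sum_mem N (fun i _ => AddSubgroup.zsmul_mem N (hvmem i) (z i))
    choose dj hdj0 hdjmem using hej
    refine ⟨∏ j, dj j, Finset.prod_ne_zero_iff.mpr (fun j _ => hdj0 j), ?_⟩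
    intro x
    have hdvd : ∀ j : Fin n, ∃ e : ℤ, (∏ k, dj k) = dj j * e := by
      intro j
      obtain ⟨e, he⟩ := Finset.dvd_prod_of_mem dj (Finset.mem_univ j)
      exact ⟨e, he⟩
    choose e he using hdvd
    have hx : (∏ k, dj k) • x = ∑ j, (x j * e j) • (dj j • ei j) := by
      funext k
      simp only [Pi.smul_apply, smul_eq_mul, Finset.sum_apply]
      rw [Finset.sum_eq_single k]
      · have h1 : ei k k = 1 := by simp [hei]
        rw [h1, he k]; ring
      · intro j _ hj
        have h0 : ei j k = 0 := by
          rw [hei]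
          simp only []
          rw [Pi.single_apply, if_neg (Ne.symm hj)]
        rw [h0]; ring
      · intro hk; exact absurd (Finset.mem_univ k) hk
    rw [hx]
    exact AddSubgroup.sum_mem N (fun j _ => AddSubgroup.zsmul_mem N (hdjmem j) _)
  -- n ≤ m + 1
  have hnm1 : n ≤ m + 1 := by
    by_contra hcon
    push_neg at hcon
    -- finrank of WQ is at most m
    have hWfr : Module.finrank ℚ WQ ≤ m := by
      classical
      have h1 : Module.finrank ℚ WQ ≤ (Set.range vQ).toFinset.card := by
        rw [hWQ]
        exact finrank_span_le_card (Set.range vQ)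
      have h2 : (Set.range vQ).toFinset.card ≤ m := by
        rw [Set.toFinset_range]
        exact le_trans (Finset.card_image_le) (by simp)
      omega
    -- there is a standard vector outside a small subspace
    have hout : ∀ (U : Submodule ℚ (Fin n → ℚ)), Module.finrank ℚ U < n →
        ∃ j : Fin n, castQ n (ei j) ∉ U := by
      intro U hU
      by_contra hcon2
      push_neg at hcon2
      have htop : U = ⊤ := by
        rw [eq_top_iff]
        rw [← Module.Basis.span_eq (Pi.basisFun ℚ (Fin n)), Submodule.span_le]
        rintro y ⟨j, rfl⟩
        have := hcon2 j
        rw [hcastei j] at this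
        simpa [Pi.basisFun_apply] using this
      rw [htop] at hU
      have : Module.finrank ℚ (⊤ : Submodule ℚ (Fin n → ℚ)) = n := by
        rw [finrank_top, Module.finrank_fin_fun ℚ]
      omega
    obtain ⟨j1, hj1⟩ := hout WQ (by omega)
    set W2 : Submodule ℚ (Fin n → ℚ) := WQ ⊔ Submodule.span ℚ {castQ n (ei j1)} with hW2
    have hW2fr : Module.finrank ℚ W2 ≤ m + 1 := by
      have h1 : Module.finrank ℚ W2 ≤ Module.finrank ℚ WQ +
          Module.finrank ℚ (Submodule.span ℚ {castQ n (ei j1)}) :=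
        Submodule.finrank_add_le_finrank_add_finrank _ _
      have h2 : Module.finrank ℚ (Submodule.span ℚ {castQ n (ei j1)}) ≤ 1 := by
        have hne : castQ n (ei j1) ≠ 0 := by
          intro h0
          have := congrFun h0 j1
          rw [hcastei j1] at h0
          have := congrFun h0 j1
          simp [Pi.single_apply] at this
        rw [show Submodule.span ℚ {castQ n (ei j1)} = (ℚ ∙ (castQ n (ei j1))) from rfl,
          finrank_span_singleton hne]
      omega
    obtain ⟨j2, hj2⟩ := hout W2 (by omega)
    obtain ⟨p, q, hpq, hmem⟩ := hdep (ei j1) (ei j2)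
    have hQmem : (p : ℚ) • castQ n (ei j1) + (q : ℚ) • castQ n (ei j2) ∈ WQ := by
      have := hNW _ hmem
      rw [map_add, map_smul, map_smul] at this
      rwa [Int.cast_smul_eq_zsmul ℚ, Int.cast_smul_eq_zsmul ℚ]
    by_cases hq0 : q = 0
    · have hp0 : p ≠ 0 := fun hp => hpq ⟨hp, hq0⟩
      apply hj1
      have : (p : ℚ) • castQ n (ei j1) ∈ WQ := by
        rw [hq0] at hQmem
        simpa using hQmem
      have hinv := Submodule.smul_mem WQ ((p : ℚ))⁻¹ this
      rwa [inv_smul_smul₀ (by exact_mod_cast hp0)] at hinv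
    · apply hj2
      have hin2 : (p : ℚ) • castQ n (ei j1) + (q : ℚ) • castQ n (ei j2) ∈ W2 :=
        Submodule.mem_sup_left hQmem
      have hj1in : castQ n (ei j1) ∈ W2 :=
        Submodule.mem_sup_right (Submodule.subset_span rfl)
      have hsub : (q : ℚ) • castQ n (ei j2) ∈ W2 := by
        have := W2.sub_mem hin2 (W2.smul_mem (p : ℚ) hj1in)
        simpa using this
      have hinv := Submodule.smul_mem W2 ((q : ℚ))⁻¹ hsub
      rwa [inv_smul_smul₀ (by exact_mod_cast hq0)] at hinv
  have hmeq : m = n - 1 := by omega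
  subst hmeq
  -- build the equivalence
  have E1 : ↥N' ≃+ (Fin (n - 1) → ℤ) := bN.equivFun.toAddEquiv
  have E0 : ↥N ≃+ ↥N' := by
    refine ⟨⟨fun x => ⟨x.1, x.2⟩, fun x => ⟨x.1, x.2⟩, ?_, ?_⟩, ?_⟩
    · intro x; rfl
    · intro x; rfl
    · intro x y; rfl
  exact ⟨E0.trans E1⟩

end

end CrystAlg


def mulPi (k : ℕ) : (Fin k → Multiplicative ℤ) ≃* Multiplicative (Fin k → ℤ) where
  toFun f := Multiplicative.ofAdd (fun i => (f i).toAdd)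
  invFun x := fun i => Multiplicative.ofAdd (x.toAdd i)
  left_inv f := rfl
  right_inv x := rfl
  map_mul' f g := rfl

theorem stabilizer_of_essential_hyperplane_in_translations
    {V W : Type*} (Γ : SimpleGraph V) (hconn : Γ.Connected)
    (side : W → V → Bool)
    (hfin : ∀ u v : V, {w : W | side w u ≠ side w v}.Finite)
    (hdist : ∀ u v : V, Γ.dist u v = {w : W | side w u ≠ side w v}.ncard)
    (G : Type*) [Group G] [MulAction G V] [MulAction G W]
    (hadj : ∀ (g : G) (u v : V), Γ.Adj u v → Γ.Adj (g • u) (g • v))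
    (hside : ∀ (g : G) (w : W) (v : V), side (g • w) (g • v) = side w v)
    (hproper : ∀ (v : V) (R : ℕ), {g : G | Γ.dist v (g • v) ≤ R}.Finite)
    (hcocompact : ∃ R : ℕ, ∀ u v : V, ∃ g : G, Γ.dist u (g • v) ≤ R)
    (n : ℕ) (hn : 1 ≤ n)
    (T : Subgroup G) [T.Normal] [T.FiniteIndex]
    (hT : Nonempty (T ≃* (Fin n → Multiplicative ℤ)))
    (H : W)
    (hessential : ∀ (v : V) (m : ℕ), ∃ g g' : G,
      side H (g • v) = true ∧ side H (g' • v) = false ∧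
      (∀ u : V, side H u = false → m ≤ Γ.dist (g • v) u) ∧
      (∀ u : V, side H u = true → m ≤ Γ.dist (g' • v) u)) :
    Nonempty (↥(T ⊓ MulAction.stabilizer G H) ≃* (Fin (n - 1) → Multiplicative ℤ)) := by
  classical
  obtain ⟨ψ⟩ := hT
  obtain ⟨v₀⟩ := hconn.nonempty
  -- elements of T commute
  have hcommT : ∀ x y : G, x ∈ T → y ∈ T → Commute x y := by
    intro x y hx hy
    have h1 : (⟨x, hx⟩ : T) * ⟨y, hy⟩ = (⟨y, hy⟩ : T) * ⟨x, hx⟩ := by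
      apply ψ.injective
      rw [map_mul, map_mul, mul_comm]
    show x * y = y * x
    exact congrArg Subtype.val h1
  -- the additive coordinates of T
  set φE : ↥T ≃* Multiplicative (Fin n → ℤ) := ψ.trans (mulPi n) with hφE
  set θ : ↥T → (Fin n → ℤ) := fun t => (φE t).toAdd with hθ
  have hθadd : ∀ t s : ↥T, θ (t * s) = θ t + θ s := by
    intro t s; simp only [hθ, map_mul, toAdd_mul]
  have hθzpow : ∀ (t : ↥T) (p : ℤ), θ (t ^ p) = p • θ t := by
    intro t p; simp only [hθ, map_zpow, toAdd_zpow]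
  have hθinv : ∀ t : ↥T, θ t⁻¹ = -θ t := by
    intro t; simp only [hθ, map_inv, toAdd_inv]
  have hθinj : Function.Injective θ := by
    intro t s h
    apply φE.injective
    exact Multiplicative.toAdd.injective h
  have hθeq : ∀ x : Fin n → ℤ, θ (φE.symm (Multiplicative.ofAdd x)) = x := by
    intro x; simp [hθ]
  -- the subgroup of coordinates of stabilizing translations
  set N : AddSubgroup (Fin n → ℤ) :=
    { carrier := {x | ∃ t : ↥T, (t : G) ∈ MulAction.stabilizer G H ∧ θ t = x}
      zero_mem' := ⟨1, by simp, by simp [hθ]⟩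
      add_mem' := by
        rintro x y ⟨t, ht, rfl⟩ ⟨s, hs, rfl⟩
        exact ⟨t * s, mul_mem ht hs, hθadd t s⟩
      neg_mem' := by
        rintro x ⟨t, ht, rfl⟩
        exact ⟨t⁻¹, inv_mem ht, hθinv t⟩ } with hN
  -- membership in N
  have hmemN : ∀ x : Fin n → ℤ,
      x ∈ N ↔ ∃ t : ↥T, (t : G) ∈ MulAction.stabilizer G H ∧ θ t = x := fun _ => Iff.rfl
  -- (no element scenario) : a uniform power landing in the stabilizer gives finite index
  have hno : ¬ ∃ d : ℤ, d ≠ 0 ∧ ∀ x : Fin n → ℤ, d • x ∈ N := by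
    rintro ⟨d, hd0, hall⟩
    -- every d-th power of a translation stabilizes H
    have hTd : ∀ t : ↥T, θ (t ^ d) = d • θ t := fun t => hθzpow t d
    have hTdK : ∀ t : ↥T, ((t : G)) ^ d ∈ T ⊓ MulAction.stabilizer G H := by
      intro t
      obtain ⟨s, hs, hse⟩ := (hmemN (d • θ t)).mp (hall (θ t))
      have : s = t ^ d := hθinj (by rw [hse, hTd])
      subst this
      constructor
      · have := (t ^ d).2
        simpa using this
      · have hcoe : ((t ^ d : ↥T) : G) = ((t : G)) ^ d := by
          push_cast
          rfl
        rwa [hcoe] at hs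
    -- the subgroup of d-th powers of translations
    set Td : Subgroup G :=
      { carrier := {g | ∃ t : ↥T, g = ((t : G)) ^ d}
        one_mem' := ⟨1, by simp⟩
        mul_mem' := by
          rintro x y ⟨t, rfl⟩ ⟨s, rfl⟩
          refine ⟨t * s, ?_⟩
          have hc : Commute ((t : G)) ((s : G)) := hcommT _ _ t.2 s.2
          have h1 : ((t * s : ↥T) : G) ^ d = ((t : G)) ^ d * ((s : G)) ^ d := by
            push_cast
            exact hc.mul_zpow d
          exact h1.symm
        inv_mem' := by
          rintro x ⟨t, rfl⟩
          refine ⟨t⁻¹, ?_⟩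
          rw [← inv_zpow]
          push_cast
          rfl } with hTdDef
    have hTdle : Td ≤ T ⊓ MulAction.stabilizer G H := by
      rintro x ⟨t, rfl⟩
      exact hTdK t
    have hTdT : Td ≤ T := fun x hx => (hTdle hx).1
    -- the quotient of T by Td is finite
    haveI : NeZero (d.natAbs) := ⟨Int.natAbs_ne_zero.mpr hd0⟩
    set ζ : ↥T → (Fin n → ZMod d.natAbs) := fun t i => ((θ t i : ℤ) : ZMod d.natAbs) with hζ
    have hζmul : ∀ t s : ↥T, ζ (t * s) = ζ t + ζ s := by
      intro t s
      funext i
      simp only [hζ, hθadd t s, Pi.add_apply]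
      push_cast
      ring
    have hζd : ∀ t : ↥T, ζ (t ^ d) = 0 := by
      intro t
      funext i
      simp only [hζ, hTd t, Pi.smul_apply, smul_eq_mul, Pi.zero_apply]
      rw [ZMod.intCast_zmod_eq_zero_iff_dvd]
      exact Dvd.dvd.mul_right (Int.natAbs_dvd.mpr dvd_rfl) _
    have hζTd : ∀ t : ↥T, t ∈ Td.subgroupOf T → ζ t = 0 := by
      intro t ht
      obtain ⟨s, hs⟩ := (Subgroup.mem_subgroupOf).mp ht
      have hts : t = s ^ d := by
        apply Subtype.ext
        rw [hs]
        push_cast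
        rfl
      rw [hts]
      exact hζd s
    -- lift ζ to the quotient
    have hresp : ∀ x y : ↥T, (QuotientGroup.leftRel (Td.subgroupOf T)).r x y
        → ζ x = ζ y := by
      intro x y hxy
      rw [QuotientGroup.leftRel_apply] at hxy
      have h2 : ζ y = ζ x + ζ (x⁻¹ * y) := by
        rw [← hζmul]
        congr 1
        group
      have h3 : ζ (x⁻¹ * y) = 0 := hζTd _ hxy
      rw [h2, h3, add_zero]
    set F : (↥T ⧸ Td.subgroupOf T) → (Fin n → ZMod d.natAbs) :=
      fun x => Quotient.liftOn' x ζ hresp with hF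
    have hFinj : Function.Injective F := by
      intro x y
      refine Quotient.inductionOn₂' x y ?_
      intro x' y' hxy
      have hζeq : ζ x' = ζ y' := hxy
      apply Quotient.sound'
      rw [QuotientGroup.leftRel_apply]
      -- the difference has all coordinates divisible by d
      have hdvd : ∀ i, d ∣ θ (x'⁻¹ * y') i := by
        intro i
        have h3 : ((θ (x'⁻¹ * y') i : ℤ) : ZMod d.natAbs) = 0 := by
          have h4 : ζ (x'⁻¹ * y') = ζ y' - ζ x' := by
            have h5 : ζ x' + ζ (x'⁻¹ * y') = ζ y' := by
              rw [← hζmul]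
              congr 1
              group
            rw [← h5]; ring
          have h6 := congrFun h4 i
          rw [hζeq] at h6
          simp only [Pi.sub_apply, sub_self] at h6
          simpa [hζ] using h6
        rw [ZMod.intCast_zmod_eq_zero_iff_dvd] at h3
        exact (Int.natAbs_dvd.mp (by exact_mod_cast h3))
      set z : Fin n → ℤ := fun i => θ (x'⁻¹ * y') i / d with hz
      have hzd : d • z = θ (x'⁻¹ * y') := by
        funext i
        simp only [Pi.smul_apply, smul_eq_mul, hz]
        exact Int.mul_ediv_cancel' (hdvd i)
      set t0 : ↥T := φE.symm (Multiplicative.ofAdd z) with ht0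
      have ht0d : t0 ^ d = x'⁻¹ * y' := by
        apply hθinj
        rw [hθzpow, ht0, hθeq, hzd]
      rw [Subgroup.mem_subgroupOf, ← ht0d]
      refine ⟨t0, ?_⟩
      push_cast
      rfl
    have hfinQT : Finite (↥T ⧸ Td.subgroupOf T) := Finite.of_injective F hFinj
    -- finite index chain
    have h7 : (Td.subgroupOf T).index ≠ 0 := by
      haveI := hfinQT
      exact Subgroup.index_ne_zero_of_finite
    have h8 : T.index ≠ 0 := Subgroup.FiniteIndex.index_ne_zero
    have h9 : Td.relIndex T * T.index = Td.index := Subgroup.relIndex_mul_index hTdT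
    have h10 : Td.index ≠ 0 := by
      rw [← h9]
      exact Nat.mul_ne_zero h7 h8
    have h11 : (T ⊓ MulAction.stabilizer G H).index ∣ Td.index :=
      Subgroup.index_dvd_of_le hTdle
    have h12 : (T ⊓ MulAction.stabilizer G H).index ≠ 0 := by
      intro h0
      rw [h0] at h11
      exact h10 (Nat.eq_zero_of_zero_dvd h11)
    have hfinK : Finite (G ⧸ (T ⊓ MulAction.stabilizer G H)) := by
      have := (Nat.card_ne_zero.mp h12).2
      exact this
    exact CrystAux2.part1 Γ hconn side hadj hside H (T ⊓ MulAction.stabilizer G H)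
      (fun k hk => (MulAction.mem_stabilizer_iff).mp hk.2) hfinK v₀ hessential
  -- (dependency) : any two coordinate vectors are dependent modulo N
  have hdep : ∀ x y : Fin n → ℤ, ∃ p q : ℤ, ¬(p = 0 ∧ q = 0) ∧ p • x + q • y ∈ N := by
    intro x y
    set t : ↥T := φE.symm (Multiplicative.ofAdd x) with ht
    set s : ↥T := φE.symm (Multiplicative.ofAdd y) with hs
    have hnot : ¬ (∀ p q : ℤ, ((t : G)) ^ p * ((s : G)) ^ q ∈ T ⊓ MulAction.stabilizer G H
        → p = 0 ∧ q = 0) := by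
      intro hinj
      exact P2.part2 Γ hconn side hfin hdist hadj hside T hcommT H v₀ hessential
        (t : G) (s : G) t.2 s.2 hinj
    push_neg at hnot
    obtain ⟨p, q, hmem, hne⟩ := hnot
    refine ⟨p, q, fun h => hne h.1 h.2, ?_⟩
    refine ⟨t ^ p * s ^ q, ?_, ?_⟩
    · have hcoe : ((t ^ p * s ^ q : ↥T) : G) = ((t : G)) ^ p * ((s : G)) ^ q := by
        push_cast; rfl
      rw [hcoe]
      exact hmem.2
    · rw [hθadd, hθzpow, hθzpow, ht, hs, hθeq, hθeq]
  -- apply the algebraic core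
  obtain ⟨E⟩ := CrystAlg.algebra_core hn N hno hdep
  -- assemble the final equivalence
  have hmem2 : ∀ t : ↥((T ⊓ MulAction.stabilizer G H).subgroupOf T), θ t.1 ∈ N :=
    fun t => ⟨t.1, ((Subgroup.mem_subgroupOf).mp t.2).2, rfl⟩
  have hmem3 : ∀ x : ↥N,
      φE.symm (Multiplicative.ofAdd ((x : Fin n → ℤ)))
        ∈ (T ⊓ MulAction.stabilizer G H).subgroupOf T := by
    intro x
    obtain ⟨t', ht', hte⟩ := x.2
    rw [Subgroup.mem_subgroupOf]
    have he : φE.symm (Multiplicative.ofAdd ((x : Fin n → ℤ))) = t' := by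
      apply hθinj
      rw [hθeq, hte]
    rw [he]
    exact ⟨t'.2, ht'⟩
  have q2 : ↥((T ⊓ MulAction.stabilizer G H).subgroupOf T) ≃* Multiplicative ↥N := by
    refine ⟨⟨fun t => Multiplicative.ofAdd ⟨θ t.1, hmem2 t⟩,
      fun x => ⟨φE.symm (Multiplicative.ofAdd ((x.toAdd : ↥N) : Fin n → ℤ)), hmem3 x.toAdd⟩,
      ?_, ?_⟩, ?_⟩
    · intro t
      apply Subtype.ext
      apply hθinj
      rw [hθeq]
      rfl
    · intro x
      apply Multiplicative.toAdd.injective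
      apply Subtype.ext
      exact hθeq _
    · intro t u
      apply Multiplicative.toAdd.injective
      apply Subtype.ext
      exact hθadd t.1 u.1
  exact ⟨(((Subgroup.subgroupOfEquivOfLe inf_le_left).symm.trans q2).trans
    (AddEquiv.toMultiplicative E)).trans (mulPi (n - 1)).symm⟩
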